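/- Let V be a real vector space, F ⊆ V nonempty, N ⊆ V, x ∈ V with R_{F,N}(x) < ∞, and let f : V → ℝ be a linear functional such that f(y) ≥ 0 for all y ∈ N and such that s := sup_{z ∈ F} f(z) is finite (f is bounded above on F). Then f(x) ≤ (1 + R_{F,N}(x)) · s. (This is the payoff bound underlying the game interpretation of the robustness: the payoff of any game that is nonnegative on the noise set N cannot exceed (1 + R_{F,N}) times its maximal payoff over the free set F.) -/

import Mathlib

open scoped ENNReal NNReal

/-- The robustness `R_{F,N}(x)`: the infimum of those `r ≥ 0` such that
`(1/(1+r)) • (x + r • y) ∈ F` for some `y ∈ N`, with `inf ∅ = ∞`. -/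
noncomputable def Rob {V : Type*} [AddCommGroup V] [Module ℝ V]
    (F N : Set V) (x : V) : ℝ≥0∞ :=
  ⨅ r ∈ {r : ℝ≥0 | ∃ y ∈ N, (1 + (r : ℝ))⁻¹ • (x + (r : ℝ) • y) ∈ F}, (r : ℝ≥0∞)

/-- Payoff bound underlying the game interpretation of the robustness: a linear
functional nonnegative on the noise set and bounded above on the free set satisfies
`f x ≤ (1 + R_{F,N}(x)) * sup_{z ∈ F} f z`. -/
theorem rob_payoff_bound {V : Type*} [AddCommGroup V] [Module ℝ V]
    (F N : Set V) (hFne : F.Nonempty) (x : V) (hfin : Rob F N x < ⊤)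
    (f : V →ₗ[ℝ] ℝ) (hfN : ∀ y ∈ N, 0 ≤ f y) (hbdd : BddAbove (f '' F)) :
    f x ≤ (1 + (Rob F N x).toReal) * sSup (f '' F) := by
  set S : Set ℝ≥0 := {r : ℝ≥0 | ∃ y ∈ N, (1 + (r : ℝ))⁻¹ • (x + (r : ℝ) • y) ∈ F} with hS
  set s : ℝ := sSup (f '' F) with hs
  -- key bound for each r ∈ S
  have key : ∀ r ∈ S, f x ≤ (1 + (r : ℝ)) * s := by
    intro r hr
    obtain ⟨y, hyN, hzF⟩ := hr
    have hr1 : (0:ℝ) < 1 + (r : ℝ) := by positivity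
    have hzle : f ((1 + (r : ℝ))⁻¹ • (x + (r : ℝ) • y)) ≤ s :=
      le_csSup hbdd ⟨_, hzF, rfl⟩
    have hfz : f ((1 + (r : ℝ))⁻¹ • (x + (r : ℝ) • y))
        = (1 + (r : ℝ))⁻¹ * (f x + (r : ℝ) * f y) := by
      simp [map_add, map_smul, smul_eq_mul, mul_add]
    have h1 : f x + (r : ℝ) * f y ≤ (1 + (r : ℝ)) * s := by
      rw [hfz] at hzle
      calc f x + (r : ℝ) * f y
          = (1 + (r : ℝ)) * ((1 + (r : ℝ))⁻¹ * (f x + (r : ℝ) * f y)) := by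
            field_simp
        _ ≤ (1 + (r : ℝ)) * s := by
            exact mul_le_mul_of_nonneg_left hzle hr1.le
    have h2 : (0:ℝ) ≤ (r : ℝ) * f y := mul_nonneg r.2 (hfN y hyN)
    linarith
  have hSne : S.Nonempty := by
    by_contra h
    rw [Set.not_nonempty_iff_eq_empty] at h
    have : Rob F N x = ⊤ := by rw [Rob, ← hS, h]; simp
    rw [this] at hfin
    exact lt_irrefl _ hfin
  have hRle : ∀ r ∈ S, Rob F N x ≤ (r : ℝ≥0∞) := fun r hr => biInf_le _ hr
  have hRtop : Rob F N x ≠ ⊤ := hfin.ne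
  rcases le_or_gt s 0 with hsle | hspos
  · obtain ⟨r, hr⟩ := hSne
    have h1 : (Rob F N x).toReal ≤ (r : ℝ) := by
      have := hRle r hr
      have := ENNReal.toReal_mono (by simp) this
      simpa using this
    calc f x ≤ (1 + (r : ℝ)) * s := key r hr
      _ ≤ (1 + (Rob F N x).toReal) * s := by nlinarith
  · rcases le_or_gt (f x) s with hle | hgt
    · have : (0:ℝ) ≤ (Rob F N x).toReal := ENNReal.toReal_nonneg
      nlinarith
    · set t : ℝ := f x / s - 1 with ht
      have htpos : 0 < t := by
        rw [ht]
        have : 1 < f x / s := (one_lt_div hspos).mpr hgt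
        linarith
      have hlow : ENNReal.ofReal t ≤ Rob F N x := by
        rw [Rob]
        refine le_iInf₂ fun r hr => ?_
        have h1 : f x ≤ (1 + (r : ℝ)) * s := key r hr
        have h2 : t ≤ (r : ℝ) := by
          have h4 : f x / s ≤ 1 + (r : ℝ) := (div_le_iff₀ hspos).mpr h1
          simp only [ht]
          linarith
        calc ENNReal.ofReal t ≤ ENNReal.ofReal (r : ℝ) := ENNReal.ofReal_le_ofReal h2
          _ = (r : ℝ≥0∞) := by simp [ENNReal.ofReal_coe_nnreal]
      have h3 : t ≤ (Rob F N x).toReal := by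
        have := ENNReal.toReal_mono hRtop hlow
        rwa [ENNReal.toReal_ofReal htpos.le] at this
      have hfx : f x = (1 + t) * s := by
        rw [ht]; field_simp; ring
      rw [hfx]
      nlinarith
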